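/- In the uniform model of configurations of t pebbles on n vertices, fix a subset S of vertices with |S| = s. Let X be the number of vertices in S receiving exactly 2 pebbles. Then E[X] ≤ s·(t/n)^2 and E[X] ≥ s·((n-1)/(n+t-1))·((t-2)/(n+t-2))^2, provided t ≥ 2. -/

import Mathlib

open Multiset Finset

def eqv1 (a b : ℕ) (v : Fin (a + 2)) :
    {C : Sym (Fin (a + 2)) (b + 2) // Multiset.count v (C : Multiset (Fin (a + 2))) = 2} ≃
    {D : Sym (Fin (a + 2)) b // v ∉ D} where
  toFun C := ⟨⟨(C.1 : Multiset (Fin (a + 2))).filter (· ≠ v), by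
      have h1 : (C.1 : Multiset (Fin (a + 2))).card = b + 2 := C.1.2
      have h2 := C.2
      rw [← Multiset.filter_add_not (· ≠ v) (C.1 : Multiset (Fin (a + 2)))] at h1
      rw [Multiset.card_add] at h1
      have h3 : (C.1 : Multiset (Fin (a + 2))).filter (fun x => ¬ x ≠ v) =
          Multiset.replicate 2 v := by
        ext x
        rw [Multiset.count_filter, Multiset.count_replicate]
        by_cases hx : x = v
        · subst hx; simp [h2]
        · simp [hx, Ne.symm hx]
      rw [h3, Multiset.card_replicate] at h1
      omega⟩, by
      intro hv
      have := (Multiset.mem_filter.mp hv).2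
      simp at this⟩
  invFun D := ⟨⟨(D.1 : Multiset (Fin (a + 2))) + Multiset.replicate 2 v, by
      simp [D.1.2]⟩, by
      have hv : Multiset.count v (D.1 : Multiset (Fin (a + 2))) = 0 :=
        Multiset.count_eq_zero.mpr D.2
      simp [Multiset.count_replicate, hv]⟩
  left_inv C := by
    apply Subtype.ext; apply Subtype.ext
    show (C.1 : Multiset (Fin (a + 2))).filter (· ≠ v) + Multiset.replicate 2 v
        = (C.1 : Multiset (Fin (a + 2)))
    have h2 := C.2
    ext x
    rw [Multiset.count_add, Multiset.count_filter, Multiset.count_replicate]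
    by_cases hx : x = v
    · subst hx; simp [h2]
    · simp [hx, Ne.symm hx]
  right_inv D := by
    apply Subtype.ext; apply Subtype.ext
    show ((D.1 : Multiset (Fin (a + 2))) + Multiset.replicate 2 v).filter (· ≠ v)
        = (D.1 : Multiset (Fin (a + 2)))
    rw [Multiset.filter_add]
    have h1 : (Multiset.replicate 2 v).filter (· ≠ v) = 0 := by
      rw [Multiset.filter_eq_nil]
      intro x hx
      simp [Multiset.eq_of_mem_replicate hx]
    have h2 : (D.1 : Multiset (Fin (a + 2))).filter (· ≠ v) = D.1 := by
      apply Multiset.filter_eq_self.mpr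
      intro x hx
      exact fun h => D.2 (h ▸ hx)
    rw [h1, h2, add_zero]

def eqv2 {α : Type*} [DecidableEq α] (k : ℕ) (v : α) :
    {D : Sym α k // v ∉ D} ≃ Sym {x : α // x ≠ v} k where
  toFun D := D.1.attach.map (fun x => ⟨x.1, fun h => D.2 (by simpa [h] using x.2)⟩)
  invFun E := ⟨E.map Subtype.val, by
    intro hv
    obtain ⟨x, _, hx⟩ := Sym.mem_map.mp hv
    exact x.2 hx⟩
  left_inv D := by
    apply Subtype.ext
    dsimp only
    rw [Sym.map_map]
    exact (Sym.map_congr fun x _ => rfl).trans D.1.attach_map_coe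
  right_inv E := by
    apply Sym.coe_injective
    apply Multiset.map_injective (Subtype.val_injective)
    dsimp only
    rw [← Sym.coe_map, ← Sym.coe_map, Sym.map_map]
    congr 1
    exact (Sym.map_congr fun x _ => rfl).trans (Sym.attach_map_coe _)

lemma card_count_two (a b : ℕ) (v : Fin (a + 2)) :
    Fintype.card {C : Sym (Fin (a + 2)) (b + 2) //
      Multiset.count v (C : Multiset (Fin (a + 2))) = 2} = (a + b).choose b := by
  rw [Fintype.card_congr ((eqv1 a b v).trans (eqv2 b v))]
  rw [Sym.card_sym_eq_choose]
  have : Fintype.card {x : Fin (a + 2) // x ≠ v} = a + 1 := by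
    simp [Fintype.card_subtype_compl]
  rw [this]
  congr 1
  omega

lemma sum_count (a b : ℕ) (S : Finset (Fin (a + 2))) :
    (∑ C : Sym (Fin (a + 2)) (b + 2),
        ((S.filter (fun v => Multiset.count v (C : Multiset (Fin (a + 2))) = 2)).card : ℚ))
      = (S.card : ℚ) * ((a + b).choose b : ℚ) := by
  calc (∑ C : Sym (Fin (a + 2)) (b + 2),
        ((S.filter (fun v => Multiset.count v (C : Multiset (Fin (a + 2))) = 2)).card : ℚ))
      = ∑ C : Sym (Fin (a + 2)) (b + 2), ∑ v ∈ S,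
          (if Multiset.count v (C : Multiset (Fin (a + 2))) = 2 then (1 : ℚ) else 0) := by
        refine Finset.sum_congr rfl fun C _ => ?_
        rw [Finset.sum_boole]
    _ = ∑ v ∈ S, ∑ C : Sym (Fin (a + 2)) (b + 2),
          (if Multiset.count v (C : Multiset (Fin (a + 2))) = 2 then (1 : ℚ) else 0) :=
        Finset.sum_comm
    _ = ∑ v ∈ S, (((a + b).choose b : ℕ) : ℚ) := by
        refine Finset.sum_congr rfl fun v _ => ?_
        rw [Finset.sum_boole, ← card_count_two a b v, Fintype.card_subtype]
    _ = (S.card : ℚ) * ((a + b).choose b : ℚ) := by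
        rw [Finset.sum_const, nsmul_eq_mul]

lemma key_nat (a b : ℕ) :
    (b + 2) * (b + 1) * (a + 1) * (a + b + 3).choose (b + 2)
      = (a + b + 3) * (a + b + 2) * (a + b + 1) * (a + b).choose b := by
  have h1 := Nat.add_one_mul_choose_eq (a + b + 2) (b + 1)
  have h2 := Nat.add_one_mul_choose_eq (a + b + 1) b
  have h3 := Nat.add_one_mul_choose_eq (a + b) a
  have h4 : (a + b + 1).choose (a + 1) = (a + b + 1).choose b := by
    rw [← Nat.choose_symm (by omega : a + 1 ≤ a + b + 1)]
    congr 1; omega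
  have h5 : (a + b).choose a = (a + b).choose b := by
    rw [← Nat.choose_symm (by omega : a ≤ a + b)]
    congr 1; omega
  rw [h4, h5] at h3
  have hq : ((b : ℚ) + 2) * (b + 1) * (a + 1) * ((a + b + 3).choose (b + 2) : ℕ)
      = ((a : ℚ) + b + 3) * (a + b + 2) * (a + b + 1) * ((a + b).choose b : ℕ) := by
    have h1q : ((a : ℚ) + b + 3) * ((a + b + 2).choose (b + 1) : ℕ)
        = ((a + b + 3).choose (b + 2) : ℕ) * (b + 2) := by exact_mod_cast congrArg (Nat.cast : ℕ → ℚ) h1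
    have h2q : ((a : ℚ) + b + 2) * ((a + b + 1).choose b : ℕ)
        = ((a + b + 2).choose (b + 1) : ℕ) * (b + 1) := by exact_mod_cast congrArg (Nat.cast : ℕ → ℚ) h2
    have h3q : ((a : ℚ) + b + 1) * ((a + b).choose b : ℕ)
        = ((a + b + 1).choose b : ℕ) * (a + 1) := by exact_mod_cast congrArg (Nat.cast : ℕ → ℚ) h3
    linear_combination (-((b : ℚ) + 1) * (a + 1)) * h1q + (-((a : ℚ) + 1) * (a + b + 3)) * h2q
      + (-((a : ℚ) + b + 3) * (a + b + 2)) * h3q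
  exact_mod_cast hq

lemma upper_q (a b : ℕ) :
    ((a + b).choose b : ℚ) / ((a + b + 3).choose (b + 2) : ℚ)
      ≤ (((b : ℚ) + 2) / ((a : ℚ) + 2)) ^ 2 := by
  have hT : (0 : ℚ) < (((a + b + 3).choose (b + 2) : ℕ) : ℚ) := by
    exact_mod_cast Nat.choose_pos (by omega)
  have hkey : ((b : ℚ) + 2) * (b + 1) * (a + 1) * ((a + b + 3).choose (b + 2) : ℕ)
      = ((a : ℚ) + b + 3) * (a + b + 2) * (a + b + 1) * ((a + b).choose b : ℕ) := by
    exact_mod_cast congrArg (Nat.cast : ℕ → ℚ) (key_nat a b)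
  rw [div_pow, div_le_div_iff₀ hT (by positivity)]
  set c1 : ℚ := (((a + b + 3).choose (b + 2) : ℕ) : ℚ)
  set c4 : ℚ := (((a + b).choose b : ℕ) : ℚ)
  have hB : (0 : ℚ) < ((a : ℚ) + b + 3) * ((a : ℚ) + b + 2) * ((a : ℚ) + b + 1) := by positivity
  rw [← mul_le_mul_iff_right₀ hB]
  have hpoly : ((b : ℚ) + 1) * ((a : ℚ) + 1) * ((a : ℚ) + 2) * ((a : ℚ) + 2)
      ≤ ((b : ℚ) + 2) * ((a : ℚ) + b + 1) * ((a : ℚ) + b + 3) * ((a : ℚ) + b + 2) := by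
    have ha : (0 : ℚ) ≤ a := Nat.cast_nonneg a
    have hb : (0 : ℚ) ≤ b := Nat.cast_nonneg b
    gcongr <;> first | positivity | linarith
  have h7 : ((a : ℚ) + b + 3) * ((a : ℚ) + b + 2) * ((a : ℚ) + b + 1) * (c4 * ((a : ℚ) + 2) ^ 2)
      = ((b : ℚ) + 2) * (((b : ℚ) + 1) * ((a : ℚ) + 1) * ((a : ℚ) + 2) * ((a : ℚ) + 2)) * c1 := by
    linear_combination (-((a : ℚ) + 2) ^ 2) * hkey
  rw [h7]
  calc ((b : ℚ) + 2) * (((b : ℚ) + 1) * ((a : ℚ) + 1) * ((a : ℚ) + 2) * ((a : ℚ) + 2)) * c1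
      ≤ ((b : ℚ) + 2) * (((b : ℚ) + 2) * ((a : ℚ) + b + 1) * ((a : ℚ) + b + 3) * ((a : ℚ) + b + 2)) * c1 := by
        have hb2 : (0 : ℚ) ≤ (b : ℚ) + 2 := by positivity
        exact mul_le_mul_of_nonneg_right (mul_le_mul_of_nonneg_left hpoly hb2) hT.le
    _ = ((a : ℚ) + b + 3) * ((a : ℚ) + b + 2) * ((a : ℚ) + b + 1) * (((b : ℚ) + 2) ^ 2 * c1) := by
        ring

lemma lower_q (a b : ℕ) :
    ((a : ℚ) + 1) / ((a : ℚ) + b + 3) * (((b : ℚ)) / ((a : ℚ) + b + 2)) ^ 2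
      ≤ ((a + b).choose b : ℚ) / ((a + b + 3).choose (b + 2) : ℚ) := by
  have hT : (0 : ℚ) < (((a + b + 3).choose (b + 2) : ℕ) : ℚ) := by
    exact_mod_cast Nat.choose_pos (by omega)
  have hkey : ((b : ℚ) + 2) * (b + 1) * (a + 1) * ((a + b + 3).choose (b + 2) : ℕ)
      = ((a : ℚ) + b + 3) * (a + b + 2) * (a + b + 1) * ((a + b).choose b : ℕ) := by
    exact_mod_cast congrArg (Nat.cast : ℕ → ℚ) (key_nat a b)
  have ha : (0 : ℚ) ≤ a := Nat.cast_nonneg a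
  have hb : (0 : ℚ) ≤ b := Nat.cast_nonneg b
  rw [div_pow, div_mul_div_comm, div_le_div_iff₀ (by positivity) hT]
  set c1 : ℚ := (((a + b + 3).choose (b + 2) : ℕ) : ℚ)
  set c4 : ℚ := (((a + b).choose b : ℕ) : ℚ)
  have hB : (0 : ℚ) < ((a : ℚ) + b + 3) * ((a : ℚ) + b + 2) * ((a : ℚ) + b + 1) := by positivity
  rw [← mul_le_mul_iff_right₀ hB]
  have hpoly : (b : ℚ) * (b : ℚ) * ((a : ℚ) + b + 1)
      ≤ ((b : ℚ) + 2) * ((b : ℚ) + 1) * ((a : ℚ) + b + 2) := by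
    gcongr <;> first | positivity | linarith
  have h7 : ((a : ℚ) + b + 3) * ((a : ℚ) + b + 2) * ((a : ℚ) + b + 1)
        * (c4 * (((a : ℚ) + b + 3) * (((a : ℚ) + b + 2) ^ 2)))
      = (((a : ℚ) + 1) * (((a : ℚ) + b + 3) * ((a : ℚ) + b + 2))
          * (((b : ℚ) + 2) * ((b : ℚ) + 1) * ((a : ℚ) + b + 2))) * c1 := by
    linear_combination (-(((a : ℚ) + b + 3) * (((a : ℚ) + b + 2) ^ 2))) * hkey
  rw [h7]
  calc ((a : ℚ) + b + 3) * ((a : ℚ) + b + 2) * ((a : ℚ) + b + 1) * (((a : ℚ) + 1) * (b : ℚ) ^ 2 * c1)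
      = (((a : ℚ) + 1) * (((a : ℚ) + b + 3) * ((a : ℚ) + b + 2))
          * ((b : ℚ) * (b : ℚ) * ((a : ℚ) + b + 1))) * c1 := by ring
    _ ≤ (((a : ℚ) + 1) * (((a : ℚ) + b + 3) * ((a : ℚ) + b + 2))
          * (((b : ℚ) + 2) * ((b : ℚ) + 1) * ((a : ℚ) + b + 2))) * c1 := by
        have hc : (0 : ℚ) ≤ ((a : ℚ) + 1) * (((a : ℚ) + b + 3) * ((a : ℚ) + b + 2)) := by positivity
        exact mul_le_mul_of_nonneg_right (mul_le_mul_of_nonneg_left hpoly hc) hT.le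

/-- In the uniform model of configurations of `t ≥ 2` pebbles on `n ≥ 2` vertices,
fix a subset `S` of the vertices with `|S| = s`, and let `X` count the vertices of `S` receiving
exactly `2` pebbles.  Then `E[X] ≤ s·(t/n)²` and
`E[X] ≥ s·((n-1)/(n+t-1))·((t-2)/(n+t-2))²`. -/
theorem stmt8 (n t : ℕ) (hn : 2 ≤ n) (ht : 2 ≤ t) (S : Finset (Fin n)) :
    ((∑ C : Sym (Fin n) t,
        ((S.filter (fun v => Multiset.count v (C : Multiset (Fin n)) = 2)).card : ℚ))
        / ((n + t - 1).choose t : ℚ)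
      ≤ (S.card : ℚ) * ((t : ℚ) / (n : ℚ)) ^ 2)
    ∧ ((S.card : ℚ) * (((n - 1 : ℕ) : ℚ) / ((n + t - 1 : ℕ) : ℚ))
          * (((t - 2 : ℕ) : ℚ) / ((n + t - 2 : ℕ) : ℚ)) ^ 2
      ≤ (∑ C : Sym (Fin n) t,
          ((S.filter (fun v => Multiset.count v (C : Multiset (Fin n)) = 2)).card : ℚ))
        / ((n + t - 1).choose t : ℚ)) := by
  obtain ⟨a, rfl⟩ : ∃ a, n = a + 2 := ⟨n - 2, by omega⟩
  obtain ⟨b, rfl⟩ : ∃ b, t = b + 2 := ⟨t - 2, by omega⟩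
  have e1 : a + 2 + (b + 2) - 1 = a + b + 3 := by omega
  have e2 : a + 2 - 1 = a + 1 := by omega
  have e3 : b + 2 - 2 = b := by omega
  have e4 : a + 2 + (b + 2) - 2 = a + b + 2 := by omega
  rw [e1, e2, e3, e4, sum_count]
  have hs : (0 : ℚ) ≤ (S.card : ℚ) := Nat.cast_nonneg _
  constructor
  · rw [mul_div_assoc]
    have h := upper_q a b
    have := mul_le_mul_of_nonneg_left h hs
    push_cast
    convert this using 2 <;> push_cast <;> ring
  · rw [mul_div_assoc, mul_assoc]
    have h := lower_q a b
    have := mul_le_mul_of_nonneg_left h hs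
    push_cast
    convert this using 2 <;> push_cast <;> ring
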